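/- Let $k$ be a field of characteristic $p$ and for $1 \le l \le p$ let $V_l$ denote the indecomposable $k[C_p]$-module of dimension $l$. Then for $1 < l < p$ there is an isomorphism of $k[C_p]$-modules $V_2 \otimes_k V_l \cong V_{l-1} \oplus V_{l+1}$, where $C_p$ acts diagonally on the tensor product. -/

import Mathlib

open Module TensorProduct

/-- `ρ` is (isomorphic to) the indecomposable `k[C_p]`-module `V_l` of dimension `l`:
`dim V = l` and the generator acts by a single size-`l` Jordan block of eigenvalue 1. -/
def IsIndecCpRep (p : ℕ) (k : Type) [Field k] (l : ℕ)
    (V : Type) [AddCommGroup V] [Module k V]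
    (ρ : Representation k (Multiplicative (ZMod p)) V) : Prop :=
  Module.finrank k V = l ∧
    ((ρ (Multiplicative.ofAdd (1 : ZMod p)) : V →ₗ[k] V) - 1) ^ (l - 1) ≠ 0 ∧
    ((ρ (Multiplicative.ofAdd (1 : ZMod p)) : V →ₗ[k] V) - 1) ^ l = 0



lemma jordan_indep {k V : Type} [Field k] [AddCommGroup V] [Module k V]
    (N : Module.End k V) (l : ℕ) (hN : N ^ l = 0) (v : V) (hv : (N ^ (l-1)) v ≠ 0) :
    LinearIndependent k (fun i : Fin l => (N ^ (i : ℕ)) v) := by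
  rw [linearIndependent_iff']
  intro s g hsum
  suffices H : ∀ n : ℕ, ∀ i ∈ s, (i : ℕ) = n → g i = 0 by
    intro i hi; exact H i i hi rfl
  intro n
  induction n using Nat.strong_induction_on with
  | _ n ih =>
    intro i hi hin
    have hil : (i : ℕ) < l := i.isLt
    have hn : n ≤ l - 1 := by omega
    have h2 : (N ^ (l-1-n)) (∑ j ∈ s, g j • (N ^ (j:ℕ)) v) = 0 := by rw [hsum]; simp
    rw [map_sum] at h2
    have h3 : ∀ j ∈ s, j ≠ i → (N ^ (l-1-n)) (g j • (N ^ (j:ℕ)) v) = 0 := by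
      intro j hj hji
      rcases lt_trichotomy (j:ℕ) n with h|h|h
      · rw [ih _ h j hj rfl, zero_smul, map_zero]
      · exact absurd (Fin.ext (h.trans hin.symm)) hji
      · have hz : (N ^ (l-1-n)) ((N ^ (j:ℕ)) v) = 0 := by
          rw [← Module.End.mul_apply, ← pow_add]
          have he : l - 1 - n + (j:ℕ) = (l - 1 - n + (j:ℕ) - l) + l := by omega
          rw [he, pow_add, hN, mul_zero, LinearMap.zero_apply]
        rw [map_smul, hz, smul_zero]
    rw [Finset.sum_eq_single_of_mem i hi h3, map_smul, ← Module.End.mul_apply, ← pow_add] at h2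
    have he : l - 1 - n + (i:ℕ) = l - 1 := by omega
    rw [he] at h2
    rcases smul_eq_zero.mp h2 with h|h
    · exact h
    · exact absurd h hv

lemma jordan_basis {k V : Type} [Field k] [AddCommGroup V] [Module k V]
    (N : Module.End k V) (l : ℕ) (hl : 0 < l) (hrank : Module.finrank k V = l)
    (hN : N ^ l = 0) (hN' : N ^ (l-1) ≠ 0) :
    ∃ (v : V) (b : Basis (Fin l) k V), (∀ i : Fin l, b i = (N ^ (i:ℕ)) v) ∧ (N ^ (l-1)) v ≠ 0 := by
  have : ∃ v : V, (N ^ (l-1)) v ≠ 0 := by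
    by_contra h
    push_neg at h
    exact hN' (LinearMap.ext fun x => h x)
  obtain ⟨v, hv⟩ := this
  have : Nonempty (Fin l) := ⟨⟨0, hl⟩⟩
  have : FiniteDimensional k V := FiniteDimensional.of_finrank_pos (hrank ▸ hl)
  have hind := jordan_indep N l hN v hv
  have hcard : Fintype.card (Fin l) = Module.finrank k V := by simp [hrank]
  exact ⟨v, basisOfLinearIndependentOfCardEqFinrank hind hcard, fun i => by
    rw [coe_basisOfLinearIndependentOfCardEqFinrank], hv⟩

noncomputable def equivAsModuleProd {k G A B₁ B₂ : Type} [CommRing k] [Monoid G]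
    [AddCommGroup A] [Module k A] [AddCommGroup B₁] [Module k B₁]
    [AddCommGroup B₂] [Module k B₂]
    (ρ : Representation k G A) (σ₁ : Representation k G B₁) (σ₂ : Representation k G B₂)
    (f : A ≃ₗ[k] B₁ × B₂)
    (hf : ∀ (g : G) (x : A), f (ρ g x) = (σ₁ g (f x).1, σ₂ g (f x).2)) :
    ρ.asModule ≃ₗ[MonoidAlgebra k G] (σ₁.asModule × σ₂.asModule) := by
  have key : ∀ (r : MonoidAlgebra k G) (x : A),
      f (ρ.asAlgebraHom r x) = (σ₁.asAlgebraHom r (f x).1, σ₂.asAlgebraHom r (f x).2) := by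
    intro r
    induction r using MonoidAlgebra.induction_on with
    | of g =>
      intro x
      simp only [Representation.asAlgebraHom_of]
      exact hf g x
    | add r s hr hs =>
      intro x
      simp [map_add, hr, hs, Prod.ext_iff]
    | smul c r hr =>
      intro x
      simp [map_smul, hr, Prod.ext_iff]
  exact
  { toFun := fun x =>
      (σ₁.asModuleEquiv.symm (f (ρ.asModuleEquiv x)).1,
       σ₂.asModuleEquiv.symm (f (ρ.asModuleEquiv x)).2)
    invFun := fun y =>
      ρ.asModuleEquiv.symm (f.symm (σ₁.asModuleEquiv y.1, σ₂.asModuleEquiv y.2))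
    left_inv := fun x => by simp
    right_inv := fun y => by simp
    map_add' := fun x y => by simp [Prod.ext_iff]
    map_smul' := fun r x => by
      ext
      · exact congrArg Prod.fst (key r (ρ.asModuleEquiv x))
      · exact congrArg Prod.snd (key r (ρ.asModuleEquiv x)) }

theorem stmt6' (p : ℕ) [Fact p.Prime] (k : Type) [Field k] [CharP k p]
    (l : ℕ) (hl : 1 < l) (hlp : l < p)
    (V W U₁ U₂ : Type) [AddCommGroup V] [Module k V] [AddCommGroup W] [Module k W]
    [AddCommGroup U₁] [Module k U₁] [AddCommGroup U₂] [Module k U₂]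
    (ρV : Representation k (Multiplicative (ZMod p)) V)
    (ρW : Representation k (Multiplicative (ZMod p)) W)
    (σ₁ : Representation k (Multiplicative (ZMod p)) U₁)
    (σ₂ : Representation k (Multiplicative (ZMod p)) U₂)
    (hV : Module.finrank k V = 2 ∧
      ((ρV (Multiplicative.ofAdd (1 : ZMod p)) : V →ₗ[k] V) - 1) ^ 1 ≠ 0 ∧
      ((ρV (Multiplicative.ofAdd (1 : ZMod p)) : V →ₗ[k] V) - 1) ^ 2 = 0)
    (hW : Module.finrank k W = l ∧
      ((ρW (Multiplicative.ofAdd (1 : ZMod p)) : W →ₗ[k] W) - 1) ^ (l-1) ≠ 0 ∧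
      ((ρW (Multiplicative.ofAdd (1 : ZMod p)) : W →ₗ[k] W) - 1) ^ l = 0)
    (h₁ : Module.finrank k U₁ = l - 1 ∧
      ((σ₁ (Multiplicative.ofAdd (1 : ZMod p)) : U₁ →ₗ[k] U₁) - 1) ^ (l-1-1) ≠ 0 ∧
      ((σ₁ (Multiplicative.ofAdd (1 : ZMod p)) : U₁ →ₗ[k] U₁) - 1) ^ (l-1) = 0)
    (h₂ : Module.finrank k U₂ = l + 1 ∧
      ((σ₂ (Multiplicative.ofAdd (1 : ZMod p)) : U₂ →ₗ[k] U₂) - 1) ^ (l+1-1) ≠ 0 ∧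
      ((σ₂ (Multiplicative.ofAdd (1 : ZMod p)) : U₂ →ₗ[k] U₂) - 1) ^ (l+1) = 0) :
    Nonempty ((ρV.tprod ρW).asModule ≃ₗ[MonoidAlgebra k (Multiplicative (ZMod p))]
      (σ₁.asModule × σ₂.asModule)) := by
  set g₀ : Multiplicative (ZMod p) := Multiplicative.ofAdd (1 : ZMod p) with hg₀
  -- the nilpotent parts
  set NV : Module.End k V := (ρV g₀ : V →ₗ[k] V) - 1 with hNV
  set NW : Module.End k W := (ρW g₀ : W →ₗ[k] W) - 1 with hNW
  set M₁ : Module.End k U₁ := (σ₁ g₀ : U₁ →ₗ[k] U₁) - 1 with hM₁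
  set M₂ : Module.End k U₂ := (σ₂ g₀ : U₂ →ₗ[k] U₂) - 1 with hM₂
  -- Jordan bases
  obtain ⟨v, bV, hbV, hv⟩ := jordan_basis NV 2 (by norm_num) hV.1 hV.2.2 (by simpa using hV.2.1)
  obtain ⟨w, bW, hbW, hw⟩ := jordan_basis NW l (by omega) hW.1 hW.2.2 hW.2.1
  obtain ⟨u₁, bU₁, hbU₁, hu₁⟩ := jordan_basis M₁ (l-1) (by omega) h₁.1 h₁.2.2 h₁.2.1
  obtain ⟨u₂, bU₂, hbU₂, hu₂⟩ := jordan_basis M₂ (l+1) (by omega) h₂.1 h₂.2.2 h₂.2.1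
  have instV : FiniteDimensional k V := FiniteDimensional.of_finrank_pos (by omega)
  have instW : FiniteDimensional k W := FiniteDimensional.of_finrank_pos (by omega)
  have instU₁ : FiniteDimensional k U₁ := FiniteDimensional.of_finrank_pos (by omega)
  have instU₂ : FiniteDimensional k U₂ := FiniteDimensional.of_finrank_pos (by omega)
  -- notation
  set v1 : V := NV v with hv1def
  have hv1 : NV v1 ≠ 0 → False := fun h => h (by
    have : NV (NV v) = (NV ^ 2) v := by rw [pow_two]; rfl
    rw [hv1def, this, hV.2.2, LinearMap.zero_apply])
  have hNVv1 : NV v1 = 0 := by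
    have : NV (NV v) = (NV ^ 2) v := by rw [pow_two]; rfl
    rw [hv1def, this, hV.2.2, LinearMap.zero_apply]
  set ww : ℕ → W := fun j => (NW ^ j) w with hww
  have hwsucc : ∀ j, NW (ww j) = ww (j+1) := by
    intro j; rw [hww]; simp only [pow_succ', Module.End.mul_apply]
  have hwzero : ∀ j, l ≤ j → ww j = 0 := by
    intro j hj
    have : j = (j - l) + l := by omega
    rw [hww]; simp only
    rw [this, pow_add, Module.End.mul_apply, hW.2.2, LinearMap.zero_apply, map_zero]
  -- the tensor rep and its nilpotent part
  set ρT := ρV.tprod ρW with hρT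
  set T : Module.End k (V ⊗[k] W) := (ρT g₀ : V ⊗[k] W →ₗ[k] V ⊗[k] W) - 1 with hT
  have hρVapp : ∀ x : V, ρV g₀ x = x + NV x := by
    intro x; rw [hNV]; simp
  have hρWapp : ∀ y : W, ρW g₀ y = y + NW y := by
    intro y; rw [hNW]; simp
  have hTapp : ∀ (x : V) (y : W),
      T (x ⊗ₜ[k] y) = NV x ⊗ₜ[k] y + x ⊗ₜ[k] NW y + NV x ⊗ₜ[k] NW y := by
    intro x y
    rw [hT]
    simp only [LinearMap.sub_apply, Module.End.one_apply, hρT,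
      Representation.tprod_apply, TensorProduct.map_tmul, hρVapp, hρWapp,
      TensorProduct.tmul_add, TensorProduct.add_tmul]
    abel
  have hTv : ∀ j, T (v ⊗ₜ[k] ww j) = v1 ⊗ₜ[k] ww j
      + v ⊗ₜ[k] ww (j+1) + v1 ⊗ₜ[k] ww (j+1) := by
    intro j; rw [hTapp, hwsucc]
  have hTv1 : ∀ j, T (v1 ⊗ₜ[k] ww j) = v1 ⊗ₜ[k] ww (j+1) := by
    intro j; rw [hTapp, hNVv1, hwsucc]; simp
  -- the two generating vectors
  set c : k := 1 - (l : k) with hc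
  set a : V ⊗[k] W := v ⊗ₜ[k] ww 1 + c • (v1 ⊗ₜ[k] ww 0) with ha
  set b : V ⊗[k] W := v ⊗ₜ[k] ww 0 with hb
  have hA : ∀ i : ℕ, (T ^ i) a =
      v ⊗ₜ[k] ww (i+1) + ((i : k) + c) • (v1 ⊗ₜ[k] ww i) + (i : k) • (v1 ⊗ₜ[k] ww (i+1)) := by
    intro i
    induction i with
    | zero => simp [ha]
    | succ i ihi =>
      have : (T ^ (i+1)) a = T ((T ^ i) a) := by rw [pow_succ', Module.End.mul_apply]
      rw [this, ihi, map_add, map_add, map_smul, map_smul, hTv, hTv1, hTv1]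
      push_cast
      module
  have hB : ∀ i : ℕ, (T ^ i) b =
      v ⊗ₜ[k] ww i + (i : k) • (v1 ⊗ₜ[k] ww (i-1)) + (i : k) • (v1 ⊗ₜ[k] ww i) := by
    intro i
    induction i with
    | zero => simp [hb]
    | succ i ihi =>
      have h' : (T ^ (i+1)) b = T ((T ^ i) b) := by rw [pow_succ', Module.End.mul_apply]
      rw [h', ihi, map_add, map_add, map_smul, map_smul, hTv, hTv1, hTv1]
      have hone : (i : k) • (v1 ⊗ₜ[k] ww (i-1+1)) = (i : k) • (v1 ⊗ₜ[k] ww i) := by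
        cases i with
        | zero => simp
        | succ i => norm_num
      rw [hone]
      push_cast
      module
  have hTa : (T ^ (l-1)) a = 0 := by
    have h1 : l - 1 + 1 = l := by omega
    have h2 : ((l-1 : ℕ) : k) + c = 0 := by
      rw [Nat.cast_sub (by omega), hc]; ring
    rw [hA (l-1), h1, hwzero l le_rfl, h2]
    simp
  have hTb : (T ^ (l+1)) b = 0 := by
    rw [hB (l+1)]
    rw [hwzero (l+1) (by omega), hwzero (l+1-1) (by omega)]
    simp
  -- the comparison map
  set ψ₁ : U₁ →ₗ[k] V ⊗[k] W := bU₁.constr k (fun i : Fin (l-1) => (T ^ (i:ℕ)) a) with hψ₁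
  set ψ₂ : U₂ →ₗ[k] V ⊗[k] W := bU₂.constr k (fun i : Fin (l+1) => (T ^ (i:ℕ)) b) with hψ₂
  set ψ : U₁ × U₂ →ₗ[k] V ⊗[k] W := ψ₁.coprod ψ₂ with hψ
  have hψ₁b : ∀ i : Fin (l-1), ψ₁ (bU₁ i) = (T ^ (i:ℕ)) a := fun i => bU₁.constr_basis k _ i
  have hψ₂b : ∀ i : Fin (l+1), ψ₂ (bU₂ i) = (T ^ (i:ℕ)) b := fun i => bU₂.constr_basis k _ i
  have hψ₁pow : ∀ j : ℕ, ψ₁ ((M₁ ^ j) u₁) = (T ^ j) a := by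
    intro j
    rcases lt_or_ge j (l-1) with h|h
    · have hj : (M₁ ^ j) u₁ = bU₁ ⟨j, h⟩ := (hbU₁ ⟨j, h⟩).symm
      rw [hj, hψ₁b]
    · have h1 : (M₁ ^ j) u₁ = 0 := by
        have hj : j = (j - (l-1)) + (l-1) := by omega
        rw [hj, pow_add, h₁.2.2, mul_zero, LinearMap.zero_apply]
      have h2 : (T ^ j) a = 0 := by
        have hj : j = (j - (l-1)) + (l-1) := by omega
        rw [hj, pow_add, Module.End.mul_apply, hTa, map_zero]
      rw [h1, h2, map_zero]
  have hψ₂pow : ∀ j : ℕ, ψ₂ ((M₂ ^ j) u₂) = (T ^ j) b := by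
    intro j
    rcases lt_or_ge j (l+1) with h|h
    · have hj : (M₂ ^ j) u₂ = bU₂ ⟨j, h⟩ := (hbU₂ ⟨j, h⟩).symm
      rw [hj, hψ₂b]
    · have h1 : (M₂ ^ j) u₂ = 0 := by
        have hj : j = (j - (l+1)) + (l+1) := by omega
        rw [hj, pow_add, h₂.2.2, mul_zero, LinearMap.zero_apply]
      have h2 : (T ^ j) b = 0 := by
        have hj : j = (j - (l+1)) + (l+1) := by omega
        rw [hj, pow_add, Module.End.mul_apply, hTb, map_zero]
      rw [h1, h2, map_zero]
  -- equivariance at the generator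
  have hσ₁app : ∀ x : U₁, σ₁ g₀ x = x + M₁ x := fun x => by rw [hM₁]; simp
  have hσ₂app : ∀ x : U₂, σ₂ g₀ x = x + M₂ x := fun x => by rw [hM₂]; simp
  have hρTapp : ∀ x, ρT g₀ x = x + T x := fun x => by rw [hT]; simp
  have heq₁ : (ρT g₀ : V ⊗[k] W →ₗ[k] V ⊗[k] W).comp ψ₁ = ψ₁.comp (σ₁ g₀) := by
    apply bU₁.ext
    intro i
    simp only [LinearMap.comp_apply]
    have h1 : M₁ (bU₁ i) = (M₁ ^ ((i:ℕ)+1)) u₁ := by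
      rw [hbU₁ i, pow_succ', Module.End.mul_apply]
    have h2 : T ((T ^ (i:ℕ)) a) = (T ^ ((i:ℕ)+1)) a := by
      rw [pow_succ', Module.End.mul_apply]
    have h3 : ψ₁ (bU₁ i + M₁ (bU₁ i)) = ψ₁ (bU₁ i) + ψ₁ (M₁ (bU₁ i)) := map_add ψ₁ _ _
    rw [hσ₁app (bU₁ i), h3, hψ₁b i, h1, hψ₁pow, hρTapp, h2]
  have heq₂ : (ρT g₀ : V ⊗[k] W →ₗ[k] V ⊗[k] W).comp ψ₂ = ψ₂.comp (σ₂ g₀) := by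
    apply bU₂.ext
    intro i
    simp only [LinearMap.comp_apply]
    have h1 : M₂ (bU₂ i) = (M₂ ^ ((i:ℕ)+1)) u₂ := by
      rw [hbU₂ i, pow_succ', Module.End.mul_apply]
    have h2 : T ((T ^ (i:ℕ)) b) = (T ^ ((i:ℕ)+1)) b := by
      rw [pow_succ', Module.End.mul_apply]
    have h3 : ψ₂ (bU₂ i + M₂ (bU₂ i)) = ψ₂ (bU₂ i) + ψ₂ (M₂ (bU₂ i)) := map_add ψ₂ _ _
    rw [hσ₂app (bU₂ i), h3, hψ₂b i, h1, hψ₂pow, hρTapp, h2]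
  have hψcomm : ∀ y : U₁ × U₂, ρT g₀ (ψ y) = ψ (σ₁ g₀ y.1, σ₂ g₀ y.2) := by
    intro y
    rw [hψ]
    simp only [LinearMap.coprod_apply, map_add]
    rw [← LinearMap.comp_apply (ρT g₀) ψ₁, heq₁, ← LinearMap.comp_apply (ρT g₀) ψ₂, heq₂]
    rfl
  -- surjectivity
  set S : Submodule k (V ⊗[k] W) := LinearMap.range ψ with hSdef
  have haS : ∀ j, j < l - 1 → (T ^ j) a ∈ S := by
    intro j hj
    exact ⟨(bU₁ ⟨j, hj⟩, 0), by simp [hψ, LinearMap.coprod_apply, hψ₁b ⟨j, hj⟩]⟩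
  have hbS : ∀ j, j < l + 1 → (T ^ j) b ∈ S := by
    intro j hj
    exact ⟨(0, bU₂ ⟨j, hj⟩), by simp [hψ, LinearMap.coprod_apply, hψ₂b ⟨j, hj⟩]⟩
  have hlk : (l : k) ≠ 0 := by
    intro h
    rw [CharP.cast_eq_zero_iff k p] at h
    exact absurd (Nat.le_of_dvd (by omega) h) (by omega)
  have hck : c - 1 ≠ 0 := by
    rw [hc]
    intro h
    apply hlk
    linear_combination -h
  have hS1 : v1 ⊗ₜ[k] ww (l-1) ∈ S := by
    have h2 : (T ^ l) b = (l:k) • (v1 ⊗ₜ[k] ww (l-1)) := by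
      rw [hB l, hwzero l le_rfl]; simp
    have hmem := hbS l (by omega)
    rw [h2] at hmem
    have hmem2 := S.smul_mem (l:k)⁻¹ hmem
    rwa [smul_smul, inv_mul_cancel₀ hlk, one_smul] at hmem2
  have hstep : ∀ j, j < l - 1 → v1 ⊗ₜ[k] ww (j+1) ∈ S → v1 ⊗ₜ[k] ww j ∈ S := by
    intro j hj hmem
    have h2 := hB (j+1)
    rw [show (j+1) - 1 = j by omega] at h2
    have key : (c - 1) • (v1 ⊗ₜ[k] ww j) =
        (T ^ j) a - (T ^ (j+1)) b + v1 ⊗ₜ[k] ww (j+1) := by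
      rw [hA j, h2]
      push_cast
      module
    have hmem2 : (c - 1) • (v1 ⊗ₜ[k] ww j) ∈ S := by
      rw [key]
      exact S.add_mem (S.sub_mem (haS j hj) (hbS (j+1) (by omega))) hmem
    have hmem3 := S.smul_mem (c-1)⁻¹ hmem2
    rwa [smul_smul, inv_mul_cancel₀ hck, one_smul] at hmem3
  have hS3 : ∀ j, j ≤ l - 1 → v1 ⊗ₜ[k] ww j ∈ S := by
    have hd : ∀ d, d ≤ l - 1 → v1 ⊗ₜ[k] ww (l - 1 - d) ∈ S := by
      intro d
      induction d with
      | zero => intro _; simpa using hS1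
      | succ d ihd =>
        intro hdle
        have h1 : l - 1 - (d+1) < l - 1 := by omega
        have h2 : (l - 1 - (d+1)) + 1 = l - 1 - d := by omega
        refine hstep _ h1 ?_
        rw [h2]
        exact ihd (by omega)
    intro j hj
    have := hd (l - 1 - j) (by omega)
    rwa [show l - 1 - (l - 1 - j) = j by omega] at this
  have hS4 : ∀ j, j ≤ l - 1 → v ⊗ₜ[k] ww j ∈ S := by
    intro j hj
    have hv' : v ⊗ₜ[k] ww j =
        (T ^ j) b - (j:k) • (v1 ⊗ₜ[k] ww (j-1)) - (j:k) • (v1 ⊗ₜ[k] ww j) := by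
      rw [hB j]; module
    rw [hv']
    exact S.sub_mem (S.sub_mem (hbS j (by omega)) (S.smul_mem _ (hS3 (j-1) (by omega))))
      (S.smul_mem _ (hS3 j hj))
  have hrange : LinearMap.range ψ = ⊤ := by
    rw [eq_top_iff, ← (bV.tensorProduct bW).span_eq, Submodule.span_le]
    rintro x ⟨⟨i, j⟩, rfl⟩
    rw [Module.Basis.tensorProduct_apply, hbV i, hbW j]
    have hjl : (j:ℕ) ≤ l - 1 := by omega
    have hsh : (NW ^ (j:ℕ)) w = ww (j:ℕ) := rfl
    rw [hsh]
    fin_cases i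
    · simp only [Fin.val_zero, pow_zero, Module.End.one_apply]
      exact hS4 j hjl
    · simp only [Fin.val_one, pow_one]
      exact hS3 j hjl
  -- bijectivity
  have hdim : finrank k (U₁ × U₂) = finrank k (V ⊗[k] W) := by
    rw [Module.finrank_prod, Module.finrank_tensorProduct, hV.1, hW.1, h₁.1, h₂.1]
    omega
  have hsurj : Function.Surjective ψ := LinearMap.range_eq_top.mp hrange
  have hinj : Function.Injective ψ :=
    (LinearMap.injective_iff_surjective_of_finrank_eq_finrank hdim).mpr hsurj
  set e : (U₁ × U₂) ≃ₗ[k] V ⊗[k] W := LinearEquiv.ofBijective ψ ⟨hinj, hsurj⟩ with he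
  have heψ : ∀ y, e y = ψ y := fun y => rfl
  -- generator equivariance for e.symm
  have hfcomm : ∀ x : V ⊗[k] W,
      e.symm (ρT g₀ x) = (σ₁ g₀ (e.symm x).1, σ₂ g₀ (e.symm x).2) := by
    intro x
    apply e.injective
    rw [e.apply_symm_apply, heψ, ← hψcomm (e.symm x)]
    have : ψ (e.symm x) = x := by rw [← heψ, e.apply_symm_apply]
    rw [this]
  -- full equivariance
  have hfall : ∀ (g : Multiplicative (ZMod p)) (x : V ⊗[k] W),
      e.symm (ρT g x) = (σ₁ g (e.symm x).1, σ₂ g (e.symm x).2) := by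
    have hpow : ∀ (n : ℕ) (x : V ⊗[k] W),
        e.symm (((ρT g₀) ^ n) x) =
          (((σ₁ g₀) ^ n) (e.symm x).1, ((σ₂ g₀) ^ n) (e.symm x).2) := by
      intro n
      induction n with
      | zero => intro x; simp
      | succ n ihn =>
        intro x
        rw [pow_succ, Module.End.mul_apply, ihn (ρT g₀ x), hfcomm x]
        simp [pow_succ, Module.End.mul_apply]
    intro g x
    obtain ⟨n, rfl⟩ : ∃ n : ℕ, g = g₀ ^ n := by
      refine ⟨(Multiplicative.toAdd g).val, ?_⟩
      rw [hg₀, ← ofAdd_nsmul]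
      have : ((Multiplicative.toAdd g).val : ℕ) • (1 : ZMod p) = Multiplicative.toAdd g := by
        rw [nsmul_eq_mul, mul_one, ZMod.natCast_val, ZMod.cast_id]
      rw [this]
      rfl
    rw [map_pow, map_pow, map_pow]
    exact hpow n x
  exact ⟨equivAsModuleProd ρT σ₁ σ₂ e.symm hfall⟩


/-- for `1 < l < p`, `V₂ ⊗ V_l ≅ V_{l-1} ⊕ V_{l+1}` as `k[C_p]`-modules,
where `C_p` acts diagonally on the tensor product. -/
theorem stmt6 (p : ℕ) [Fact p.Prime] (k : Type) [Field k] [CharP k p]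
    (l : ℕ) (hl : 1 < l) (hlp : l < p)
    (V W U₁ U₂ : Type) [AddCommGroup V] [Module k V] [AddCommGroup W] [Module k W]
    [AddCommGroup U₁] [Module k U₁] [AddCommGroup U₂] [Module k U₂]
    (ρV : Representation k (Multiplicative (ZMod p)) V)
    (ρW : Representation k (Multiplicative (ZMod p)) W)
    (σ₁ : Representation k (Multiplicative (ZMod p)) U₁)
    (σ₂ : Representation k (Multiplicative (ZMod p)) U₂)
    (hV : IsIndecCpRep p k 2 V ρV) (hW : IsIndecCpRep p k l W ρW)
    (h₁ : IsIndecCpRep p k (l - 1) U₁ σ₁) (h₂ : IsIndecCpRep p k (l + 1) U₂ σ₂) :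
    Nonempty ((ρV.tprod ρW).asModule ≃ₗ[MonoidAlgebra k (Multiplicative (ZMod p))]
      (σ₁.asModule × σ₂.asModule)) := by
  exact stmt6' p k l hl hlp V W U₁ U₂ ρV ρW σ₁ σ₂ hV hW h₁ h₂
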